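/- Let p be a continuous even function on ℝ, non-decreasing on ℝ₊, with 1 ≤ p(x) ≤ 2 for all x and lim_{x→∞} p(x) = p⋄ ≤ 2, and define q(x) = p'(1/x) for x ≠ 0, where p'(y) is the conjugate exponent of p(y). If q is log-Hölder continuous and there is a constant C > 0 such that ‖f̂‖_{q(·)} ≤ C‖f‖_{p(·)} for every Schwartz function f on ℝ, then p is constant: p(x) = p⋄ for all x. -/

import Mathlib

open MeasureTheory Filter
open scoped ENNReal FourierTransform

/-- The modular `ρ_q(g) = ∫_ℝ |g(x)|^{q(x)} dx` for an exponent `q : ℝ → [1,∞]`;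
at points where `q x = ∞` the integrand is `0` if `|g x| ≤ 1` and `∞` otherwise. -/
noncomputable def modularE (q : ℝ → ℝ≥0∞) (g : ℝ → ℂ) : ℝ≥0∞ :=
  ∫⁻ x : ℝ,
    if q x = ∞ then (if ‖g x‖ ≤ 1 then 0 else ∞)
    else ENNReal.ofReal (‖g x‖ ^ (q x).toReal)

/-- The variable Lebesgue norm `‖g‖_{q(·)} = inf {λ > 0 : ρ_q(g/λ) ≤ 1}` (as an
extended real number, `∞` if no such `λ` exists). -/
noncomputable def varNormE (q : ℝ → ℝ≥0∞) (g : ℝ → ℂ) : ℝ≥0∞ :=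
  sInf {l : ℝ≥0∞ | ∃ lr : ℝ, 0 < lr ∧ l = ENNReal.ofReal lr ∧
    modularE q (fun x => g x / (lr : ℂ)) ≤ 1}

/-- `q` is log-Hölder continuous. -/
def LogHolder (q : ℝ → ℝ≥0∞) : Prop :=
  ∃ C : ℝ, 0 < C ∧ ∀ x y : ℝ, |x - y| < 1 / 2 →
    ((q x ≠ ∞ → q y ≠ ∞ →
        |(q x).toReal - (q y).toReal| ≤ C / (-Real.log |x - y|)) ∧
      (q x = ∞ → ((q y)⁻¹).toReal ≤ C / (-Real.log |x - y|)))

/-- The conjugate exponent `a'` of `a ∈ [1,∞]`, i.e. `1/a + 1/a' = 1`. -/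
noncomputable def conjExp (a : ℝ≥0∞) : ℝ≥0∞ := (1 - a⁻¹)⁻¹

section AuxGauss

open Complex Polynomial
open scoped Real

/-- The Gaussian-type function `x ↦ exp (-π b x² + 2 π c x)`. -/
noncomputable def gaussFun (b c : ℂ) : ℝ → ℂ :=
  fun x => Complex.exp (-(π:ℂ)*b*(x:ℂ)^2 + 2*(π:ℂ)*c*(x:ℂ))

lemma gaussFun_hasDerivAt (b c : ℂ) (x : ℝ) :
    HasDerivAt (gaussFun b c) ((-(π:ℂ)*b*(2*x) + 2*(π:ℂ)*c) * gaussFun b c x) x := by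
  have hz : ∀ z : ℂ, HasDerivAt (fun z : ℂ => Complex.exp (-(π:ℂ)*b*z^2 + 2*(π:ℂ)*c*z))
      (Complex.exp (-(π:ℂ)*b*z^2 + 2*(π:ℂ)*c*z) * (-(π:ℂ)*b*((2:ℕ)*z^(2-1)) + 2*(π:ℂ)*c*1)) z := by
    intro z
    have h1 : HasDerivAt (fun z : ℂ => -(π:ℂ)*b*z^2 + 2*(π:ℂ)*c*z)
        (-(π:ℂ)*b*((2:ℕ)*z^(2-1)) + 2*(π:ℂ)*c*1) z :=
      ((hasDerivAt_pow 2 z).const_mul (-(π:ℂ)*b)).add ((hasDerivAt_id' z).const_mul (2*(π:ℂ)*c))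
    exact h1.cexp
  have h2 := (hz (x:ℂ)).comp_ofReal
  have h3 : (-(π:ℂ)*b*(2*(x:ℂ)) + 2*(π:ℂ)*c) * gaussFun b c x
      = Complex.exp (-(π:ℂ)*b*(x:ℂ)^2 + 2*(π:ℂ)*c*(x:ℂ)) * (-(π:ℂ)*b*((2:ℕ)*(x:ℂ)^(2-1)) + 2*(π:ℂ)*c*1) := by
    rw [gaussFun]; push_cast; ring
  rw [h3]
  exact h2

lemma contDiff_gaussFun (b c : ℂ) : ContDiff ℝ (⊤:ℕ∞) (gaussFun b c) := by
  have h1 : ContDiff ℝ (⊤:ℕ∞) (fun x : ℝ => ((x:ℂ))) := Complex.ofRealCLM.contDiff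
  have h2 : ContDiff ℝ (⊤:ℕ∞) (fun x : ℝ => -(π:ℂ)*b*(x:ℂ)^2 + 2*(π:ℂ)*c*(x:ℂ)) :=
    (contDiff_const.mul (h1.pow 2)).add (contDiff_const.mul h1)
  exact (Complex.contDiff_exp (𝕜 := ℂ)).restrict_scalars ℝ |>.comp h2

lemma iteratedDeriv_gaussFun (b c : ℂ) (n : ℕ) :
    ∃ Q : Polynomial ℂ, ∀ x : ℝ, iteratedDeriv n (gaussFun b c) x = Q.eval (x:ℂ) * gaussFun b c x := by
  induction n with
  | zero => exact ⟨1, fun x => by simp [iteratedDeriv_zero]⟩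
  | succ n ih =>
    obtain ⟨Q, hQ⟩ := ih
    refine ⟨Q.derivative + Q * (Polynomial.C (-2*(π:ℂ)*b) * Polynomial.X + Polynomial.C (2*(π:ℂ)*c)),
      fun x => ?_⟩
    rw [iteratedDeriv_succ]
    have hfun : iteratedDeriv n (gaussFun b c) = fun y : ℝ => Q.eval (y:ℂ) * gaussFun b c y :=
      funext hQ
    rw [hfun]
    have hp : HasDerivAt (fun y : ℝ => Q.eval ((y:ℝ):ℂ)) (Q.derivative.eval (x:ℂ)) x :=
      (Q.hasDerivAt (x:ℂ)).comp_ofReal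
    have hg := gaussFun_hasDerivAt b c x
    have := hp.mul hg
    rw [show (fun y : ℝ => Q.eval (y:ℂ) * gaussFun b c y) = (fun y : ℝ => Q.eval (y:ℂ)) * gaussFun b c from rfl, this.deriv]
    simp only [Polynomial.eval_add, Polynomial.eval_mul, Polynomial.eval_C, Polynomial.eval_X]
    ring

lemma tendsto_pow_mul_exp_quad_atTop (br cr : ℝ) (hbr : 0 < br) (i : ℕ) :
    Tendsto (fun x : ℝ => |x|^i * Real.exp (-br*x^2 + cr*x)) atTop (nhds 0) := by
  have h := (rexp_neg_quadratic_isLittleO_rpow_atTop (a := -br) (by linarith) cr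
    (-(i:ℝ))).tendsto_div_nhds_zero
  refine h.congr' ?_
  filter_upwards [eventually_gt_atTop 0] with x hx
  rw [Real.rpow_neg hx.le, Real.rpow_natCast, div_eq_mul_inv, inv_inv, abs_of_pos hx]
  ring

lemma tendsto_pow_mul_exp_quad (br cr : ℝ) (hbr : 0 < br) (i : ℕ) :
    Tendsto (fun x : ℝ => |x|^i * Real.exp (-br*x^2 + cr*x)) (Filter.cocompact ℝ) (nhds 0) := by
  rw [cocompact_eq_atBot_atTop, tendsto_sup]
  refine ⟨?_, tendsto_pow_mul_exp_quad_atTop br cr hbr i⟩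
  have h := (tendsto_pow_mul_exp_quad_atTop br (-cr) hbr i).comp tendsto_neg_atBot_atTop
  refine h.congr fun x => ?_
  simp only [Function.comp_apply, abs_neg, neg_sq]
  ring_nf

lemma bounded_of_tendsto_cocompact {F : ℝ → ℝ} (hF : Continuous F)
    (h : Tendsto F (Filter.cocompact ℝ) (nhds 0)) : ∃ C, ∀ x, F x ≤ C := by
  have h1 : ∀ᶠ x in Filter.cocompact ℝ, F x ≤ 1 :=
    h.eventually (eventually_le_nhds (by norm_num : (0:ℝ) < 1))
  rw [Filter.eventually_iff, Filter.mem_cocompact] at h1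
  obtain ⟨K, hK, hKs⟩ := h1
  obtain ⟨C, hC⟩ := hK.exists_bound_of_continuousOn hF.continuousOn
  refine ⟨max C 1, fun x => ?_⟩
  by_cases hx : x ∈ K
  · exact le_trans (le_trans (le_abs_self _) (hC x hx)) (le_max_left _ _)
  · exact le_trans (hKs hx) (le_max_right _ _)

lemma norm_gaussFun (b c : ℂ) (x : ℝ) :
    ‖gaussFun b c x‖ = Real.exp (-(π*b.re)*x^2 + (2*π*c.re)*x) := by
  rw [gaussFun, Complex.norm_exp]
  congr 1
  simp [Complex.add_re, Complex.mul_re, ← Complex.ofReal_pow, Complex.ofReal_re,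
    Complex.ofReal_im]

lemma poly_gauss_bounded (b c : ℂ) (hb : 0 < b.re) (R : Polynomial ℂ) :
    ∃ C, ∀ x : ℝ, ‖R.eval (x:ℂ) * gaussFun b c x‖ ≤ C := by
  set d := R.natDegree
  have hRd : ∀ x : ℝ, ‖R.eval (x:ℂ)‖ ≤ ∑ i ∈ Finset.range (d+1), ‖R.coeff i‖ * |x|^i := by
    intro x
    rw [Polynomial.eval_eq_sum_range]
    refine (norm_sum_le _ _).trans ?_
    apply Finset.sum_le_sum
    intro i _
    rw [norm_mul, norm_pow]
    simp [Complex.norm_real]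
  have hmono : ∀ i : ℕ, ∃ C, ∀ x : ℝ, |x|^i * Real.exp (-(π*b.re)*x^2 + (2*π*c.re)*x) ≤ C := by
    intro i
    have hcont : Continuous (fun x : ℝ => |x|^i * Real.exp (-(π*b.re)*x^2 + (2*π*c.re)*x)) := by
      continuity
    exact bounded_of_tendsto_cocompact hcont
      (tendsto_pow_mul_exp_quad (π*b.re) (2*π*c.re) (by positivity) i)
  choose Cm hCm using hmono
  refine ⟨∑ i ∈ Finset.range (d+1), ‖R.coeff i‖ * Cm i, fun x => ?_⟩
  rw [norm_mul, norm_gaussFun]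
  calc ‖R.eval (x:ℂ)‖ * Real.exp (-(π*b.re)*x^2 + (2*π*c.re)*x)
      ≤ (∑ i ∈ Finset.range (d+1), ‖R.coeff i‖ * |x|^i) * Real.exp (-(π*b.re)*x^2 + (2*π*c.re)*x) :=
        mul_le_mul_of_nonneg_right (hRd x) (Real.exp_nonneg _)
    _ = ∑ i ∈ Finset.range (d+1), ‖R.coeff i‖ * (|x|^i * Real.exp (-(π*b.re)*x^2 + (2*π*c.re)*x)) := by
        rw [Finset.sum_mul]; congr 1; ext i; ring
    _ ≤ ∑ i ∈ Finset.range (d+1), ‖R.coeff i‖ * Cm i := by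
        apply Finset.sum_le_sum; intro i _
        exact mul_le_mul_of_nonneg_left (hCm i x) (norm_nonneg _)

/-- The Gaussian-type function as a Schwartz function. -/
noncomputable def gaussSchwartz (b c : ℂ) (hb : 0 < b.re) : SchwartzMap ℝ ℂ where
  toFun := gaussFun b c
  smooth' := contDiff_gaussFun b c
  decay' := by
    intro k n
    obtain ⟨Q, hQ⟩ := iteratedDeriv_gaussFun b c n
    obtain ⟨C, hC⟩ := poly_gauss_bounded b c hb (Polynomial.X^k * Q)
    refine ⟨C, fun x => ?_⟩
    rw [norm_iteratedFDeriv_eq_norm_iteratedDeriv, hQ]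
    have := hC x
    rw [Polynomial.eval_mul, Polynomial.eval_pow, Polynomial.eval_X, mul_assoc, norm_mul,
      norm_pow] at this
    simpa [Complex.norm_real] using this

@[simp] lemma gaussSchwartz_apply (b c : ℂ) (hb : 0 < b.re) :
    ⇑(gaussSchwartz b c hb) = gaussFun b c := rfl

lemma norm_fourier_gauss (L aa X β γ : ℝ) (hL : 0 < L) (hβ : β = (L⁻¹)^2) (hγ : γ = X*β)
    (t : ℝ) :
    ‖𝓕 (gaussFun ((β:ℝ):ℂ) (((γ:ℝ):ℂ) + ((aa:ℝ):ℂ)*Complex.I)) t‖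
      = L * Real.exp (π*β*X^2) * Real.exp (-(π*L^2)*(t-aa)^2) := by
  have hβ0 : (0:ℝ) < β := by rw [hβ]; positivity
  have hb : (0:ℝ) < (((β:ℝ):ℂ)).re := by simpa using hβ0
  have hF : 𝓕 (gaussFun ((β:ℝ):ℂ) (((γ:ℝ):ℂ) + ((aa:ℝ):ℂ)*Complex.I))
      = fun t : ℝ => 1 / ((β:ℝ):ℂ) ^ (1/2 : ℂ) *
        Complex.exp (-(π:ℂ) / ((β:ℝ):ℂ) *
          ((t:ℂ) + Complex.I * (((γ:ℝ):ℂ) + ((aa:ℝ):ℂ)*Complex.I)) ^ 2) :=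
    fourier_gaussian_pi' hb _
  simp only [hF]
  have hz : ((t:ℂ) + Complex.I * (((γ:ℝ):ℂ) + ((aa:ℝ):ℂ)*Complex.I))
      = (((t - aa : ℝ)):ℂ) + ((γ:ℝ):ℂ)*Complex.I := by
    have h1 : Complex.I * (((γ:ℝ):ℂ) + ((aa:ℝ):ℂ)*Complex.I)
        = ((γ:ℝ):ℂ)*Complex.I + ((aa:ℝ):ℂ)*(Complex.I*Complex.I) := by ring
    rw [h1, Complex.I_mul_I]
    push_cast
    ring
  rw [hz]
  rw [norm_mul]
  have h12 : (((β:ℝ):ℂ)) ^ (1/2 : ℂ) = (((β ^ ((1:ℝ)/2) : ℝ)):ℂ) := by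
    rw [Complex.ofReal_cpow hβ0.le]
    norm_num
  have hβhalf : β ^ ((1:ℝ)/2) = L⁻¹ := by
    rw [hβ, ← Real.rpow_natCast L⁻¹ 2, ← Real.rpow_mul (by positivity)]
    norm_num
  have hpre : ‖1 / (((β:ℝ):ℂ)) ^ (1/2 : ℂ)‖ = L := by
    rw [norm_div, norm_one, h12, Complex.norm_real, Real.norm_eq_abs,
      abs_of_pos (by rw [hβhalf]; positivity), hβhalf, one_div, inv_inv]
  rw [hpre]
  have hw : (-(π:ℂ) / ((β:ℝ):ℂ) * ((((t - aa : ℝ)):ℂ) + ((γ:ℝ):ℂ)*Complex.I) ^ 2).re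
      = -π/β * ((t-aa)^2 - γ^2) := by
    have h1 : -(π:ℂ)/((β:ℝ):ℂ) = (((-π/β : ℝ)):ℂ) := by push_cast; ring
    rw [h1, pow_two, Complex.re_ofReal_mul, Complex.mul_re]
    simp only [Complex.add_re, Complex.add_im, Complex.ofReal_re, Complex.ofReal_im,
      Complex.mul_re, Complex.mul_im, Complex.I_re, Complex.I_im]
    ring
  rw [Complex.norm_exp, hw]
  have hexpeq : -π/β * ((t-aa)^2 - γ^2) = π*β*X^2 + (-(π*L^2)*(t-aa)^2) := by
    rw [hγ, hβ]
    field_simp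
    ring
  rw [hexpeq, Real.exp_add]
  ring

lemma conjExp_toReal_ge (s α : ℝ) (h1 : 1 ≤ s) (hsα : s ≤ α) (hα : 1 < α)
    (hne : conjExp (ENNReal.ofReal s) ≠ ∞) :
    (1 - α⁻¹)⁻¹ ≤ (conjExp (ENNReal.ofReal s)).toReal := by
  rcases eq_or_lt_of_le h1 with heq | hlt
  · exfalso; apply hne; rw [conjExp, ← heq]; simp
  · have hs0 : (0:ℝ) < s := by linarith
    have hsinv : s⁻¹ < 1 := inv_lt_one_of_one_lt₀ hlt
    have h1s : (0:ℝ) < 1 - s⁻¹ := by linarith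
    have heq2 : conjExp (ENNReal.ofReal s) = ENNReal.ofReal ((1 - s⁻¹)⁻¹) := by
      rw [conjExp, ← ENNReal.ofReal_inv_of_pos hs0, ← ENNReal.ofReal_one,
        ← ENNReal.ofReal_sub _ (by positivity), ENNReal.ofReal_inv_of_pos h1s]
    rw [heq2, ENNReal.toReal_ofReal (by positivity)]
    have hαinv : α⁻¹ ≤ s⁻¹ := inv_anti₀ hs0 hsα
    exact inv_anti₀ h1s (by linarith)

lemma rhs_bound (p : ℝ → ℝ) (hp1 : ∀ x, 1 ≤ p x)
    (g : ℝ → ℂ) (M L T r X : ℝ) (hM : 0 < M) (hL : 1 ≤ L) (hr1 : 1 < r) (hr2 : r ≤ 2)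
    (hX : X = T + L^2)
    (hT : ∀ y, T ≤ y → r ≤ p y)
    (hg : ∀ x, ‖g x‖ = M * Real.exp (-(π*(L⁻¹)^2) * (x-X)^2)) :
    modularE (fun x => ENNReal.ofReal (p x))
      (fun x => g x / ((2*M*L^(r⁻¹) : ℝ):ℂ)) ≤ 1 := by
  have hL0 : (0:ℝ) < L := lt_of_lt_of_le one_pos hL
  have hr0 : (0:ℝ) < r := by linarith
  have hLr1 : 1 ≤ L^(r⁻¹) := by
    have := Real.rpow_le_rpow_of_exponent_le hL (show (0:ℝ) ≤ r⁻¹ by positivity)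
    rwa [Real.rpow_zero] at this
  have hLr0 : 0 < L^(r⁻¹) := lt_of_lt_of_le one_pos hLr1
  set c1 : ℝ := 2*M*L^(r⁻¹) with hc1def
  have hc1pos : 0 < c1 := by positivity
  set u : ℝ → ℝ := fun x => M/c1 * Real.exp (-(π*(L⁻¹)^2) * (x-X)^2) with hudef
  have hnorm : ∀ x, ‖g x / (c1:ℂ)‖ = u x := by
    intro x
    rw [norm_div, hg, Complex.norm_real, Real.norm_eq_abs, abs_of_pos hc1pos]
    ring
  have hu_pos : ∀ x, 0 < u x := fun x => by positivity
  have hMc : M/c1 = (2*L^(r⁻¹))⁻¹ := by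
    rw [hc1def]; field_simp
  have hMc2 : M/c1 ≤ 1/2 := by
    rw [hMc]
    rw [inv_le_comm₀ (by positivity) (by norm_num)]
    nlinarith
  have hu_le1 : ∀ x, u x ≤ 1 := by
    intro x
    have h0 : (0:ℝ) ≤ (π*(L⁻¹)^2) * (x-X)^2 := by positivity
    have h1 : Real.exp (-(π*(L⁻¹)^2) * (x-X)^2) ≤ 1 := by
      rw [Real.exp_le_one_iff]; linarith
    calc u x ≤ M/c1 * 1 := mul_le_mul_of_nonneg_left h1 (by positivity)
      _ ≤ 1 := by nlinarith
  have hmodeq : modularE (fun x => ENNReal.ofReal (p x)) (fun x => g x / ((c1:ℝ):ℂ))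
      = ∫⁻ x : ℝ, ENNReal.ofReal (u x ^ (p x)) := by
    apply lintegral_congr
    intro x
    rw [if_neg ENNReal.ofReal_ne_top, ENNReal.toReal_ofReal (by linarith [hp1 x]), hnorm x]
  rw [hmodeq, ← lintegral_add_compl _ (measurableSet_Ici (a := T))]
  have hinner : ∀ k : ℝ, Continuous (fun x : ℝ => k * (x-X)^2) :=
    fun k => continuous_const.mul ((continuous_id.sub continuous_const).pow 2)
  have hucont : Continuous u :=
    continuous_const.mul (Real.continuous_exp.comp (hinner _))
  -- part A
  have hA : ∫⁻ x in Set.Ici T, ENNReal.ofReal (u x ^ p x) ≤ ENNReal.ofReal (1/2) := by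
    have step1 : ∫⁻ x in Set.Ici T, ENNReal.ofReal (u x ^ p x)
        ≤ ∫⁻ x in Set.Ici T, ENNReal.ofReal (u x ^ r) := by
      apply setLIntegral_mono
      · exact ENNReal.measurable_ofReal.comp
          ((hucont.rpow_const (fun x => Or.inr hr0.le)).measurable)
      · intro x hx
        exact ENNReal.ofReal_le_ofReal
          (Real.rpow_le_rpow_of_exponent_ge (hu_pos x) (hu_le1 x) (hT x hx))
    have hur : ∀ x, u x ^ r = (M/c1)^r * Real.exp (-(π*(L⁻¹)^2*r) * (x-X)^2) := by
      intro x
      rw [hudef]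
      rw [Real.mul_rpow (by positivity) (Real.exp_nonneg _), ← Real.exp_mul]
      ring_nf
    have hint : Integrable (fun x => (M/c1)^r * Real.exp (-(π*(L⁻¹)^2*r) * (x-X)^2)) := by
      exact ((integrable_exp_neg_mul_sq (show (0:ℝ) < π*(L⁻¹)^2*r by positivity)).comp_sub_right
        X).const_mul _
    have step2 : ∫⁻ x, ENNReal.ofReal (u x ^ r)
        = ENNReal.ofReal ((M/c1)^r * Real.sqrt (π/(π*(L⁻¹)^2*r))) := by
      rw [← ofReal_integral_eq_lintegral_ofReal]
      · congr 1
        simp only [hur]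
        rw [MeasureTheory.integral_const_mul]
        congr 1
        rw [MeasureTheory.integral_sub_right_eq_self
          (fun x => Real.exp (-(π*(L⁻¹)^2*r) * x^2)) X]
        exact integral_gaussian _
      · exact hint.congr (Eventually.of_forall (fun x => (hur x).symm))
      · filter_upwards with x
        have := hu_pos x
        positivity
    refine step1.trans ((setLIntegral_le_lintegral _ _).trans ?_)
    rw [step2]
    apply ENNReal.ofReal_le_ofReal
    have hsq : Real.sqrt (π/(π*(L⁻¹)^2*r)) ≤ L := by
      have heq : π/(π*(L⁻¹)^2*r) = L^2/r := by
        field_simp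
      rw [heq]
      calc Real.sqrt (L^2/r) ≤ Real.sqrt (L^2) := by
            apply Real.sqrt_le_sqrt
            rw [div_le_iff₀ hr0]
            nlinarith [sq_nonneg L]
        _ = L := Real.sqrt_sq hL0.le
    have h2r : (2:ℝ) ≤ 2^r := by
      have := Real.rpow_le_rpow_of_exponent_le (x := 2) (by norm_num) (le_of_lt hr1)
      rwa [Real.rpow_one] at this
    have hMcr : (M/c1)^r = (2^r * L)⁻¹ := by
      rw [hMc, Real.inv_rpow (by positivity), Real.mul_rpow (by norm_num) hLr0.le,
        ← Real.rpow_mul hL0.le, inv_mul_cancel₀ (ne_of_gt hr0), Real.rpow_one]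
    rw [hMcr]
    calc (2^r*L)⁻¹ * Real.sqrt (π/(π*(L⁻¹)^2*r)) ≤ (2^r*L)⁻¹ * L :=
          mul_le_mul_of_nonneg_left hsq (by positivity)
      _ ≤ 1/2 := by
          rw [mul_comm, ← div_eq_mul_inv, div_le_iff₀ (by positivity)]
          nlinarith [mul_le_mul_of_nonneg_right h2r hL0.le]
  -- part B
  have hB : ∫⁻ x in (Set.Ici T)ᶜ, ENNReal.ofReal (u x ^ p x) ≤ ENNReal.ofReal (1/2) := by
    set w : ℝ → ℝ :=
      fun x => M/c1 * Real.exp (-(π/2)*L^2) * Real.exp (-(π*(L⁻¹)^2/2) * (x-X)^2) with hwdef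
    have hwcont : Continuous w :=
      continuous_const.mul (Real.continuous_exp.comp (hinner _))
    have step1 : ∫⁻ x in (Set.Ici T)ᶜ, ENNReal.ofReal (u x ^ p x)
        ≤ ∫⁻ x in (Set.Ici T)ᶜ, ENNReal.ofReal (w x) := by
      apply setLIntegral_mono
      · exact ENNReal.measurable_ofReal.comp hwcont.measurable
      · intro x hx
        rw [Set.mem_compl_iff, Set.mem_Ici, not_le] at hx
        apply ENNReal.ofReal_le_ofReal
        have h1 : u x ^ p x ≤ u x ^ (1:ℝ) :=
          Real.rpow_le_rpow_of_exponent_ge (hu_pos x) (hu_le1 x) (hp1 x)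
        rw [Real.rpow_one] at h1
        refine h1.trans ?_
        rw [hudef, hwdef]
        simp only []
        rw [mul_assoc, ← Real.exp_add]
        apply mul_le_mul_of_nonneg_left _ (by positivity)
        apply Real.exp_le_exp.mpr
        have hXx : L^2 ≤ X - x := by rw [hX]; linarith
        have hsq : (L^2)^2 ≤ (x - X)^2 := by
          have : (L^2)^2 ≤ (X - x)^2 := by
            apply pow_le_pow_left₀ (by positivity) hXx
          nlinarith [this]
        have key : (π*(L⁻¹)^2/2) * (L^2)^2 ≤ (π*(L⁻¹)^2/2) * (x-X)^2 :=
          mul_le_mul_of_nonneg_left hsq (by positivity)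
        have key2 : (π*(L⁻¹)^2/2) * (L^2)^2 = (π/2)*L^2 := by
          field_simp
        linarith [key, key2]
    have hint : Integrable w := by
      rw [hwdef]
      exact ((integrable_exp_neg_mul_sq (show (0:ℝ) < π*(L⁻¹)^2/2 by positivity)).comp_sub_right
        X).const_mul _
    have step2 : ∫⁻ x, ENNReal.ofReal (w x)
        = ENNReal.ofReal (M/c1 * Real.exp (-(π/2)*L^2) * Real.sqrt (π/(π*(L⁻¹)^2/2))) := by
      rw [← ofReal_integral_eq_lintegral_ofReal hint]
      · congr 1
        rw [hwdef]
        simp only []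
        rw [MeasureTheory.integral_const_mul]
        congr 1
        rw [MeasureTheory.integral_sub_right_eq_self
          (fun x => Real.exp (-(π*(L⁻¹)^2/2) * x^2)) X]
        exact integral_gaussian _
      · filter_upwards with x
        rw [hwdef]
        positivity
    refine step1.trans ((setLIntegral_le_lintegral _ _).trans ?_)
    rw [step2]
    apply ENNReal.ofReal_le_ofReal
    have hsq : Real.sqrt (π/(π*(L⁻¹)^2/2)) ≤ 2*L := by
      have heq : π/(π*(L⁻¹)^2/2) = 2*L^2 := by field_simp
      rw [heq]
      calc Real.sqrt (2*L^2) ≤ Real.sqrt ((2*L)^2) := by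
            apply Real.sqrt_le_sqrt; nlinarith [sq_nonneg L]
        _ = 2*L := Real.sqrt_sq (by positivity)
    have hexp : Real.exp (-(π/2)*L^2) * (2*L) ≤ 1 := by
      rw [show -(π/2)*L^2 = -((π/2)*L^2) by ring, Real.exp_neg,
        inv_mul_le_iff₀ (Real.exp_pos _), mul_one]
      have h1 := Real.add_one_le_exp ((π/2)*L^2)
      have hpi : (3:ℝ) ≤ π := Real.pi_gt_three.le
      have h2 : (3/2)*L^2 + 1 ≤ (π/2)*L^2 + 1 := by nlinarith [sq_nonneg L]
      linarith [sq_nonneg (L-1), sq_nonneg L]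
    calc M/c1 * Real.exp (-(π/2)*L^2) * Real.sqrt (π/(π*(L⁻¹)^2/2))
        ≤ M/c1 * Real.exp (-(π/2)*L^2) * (2*L) :=
          mul_le_mul_of_nonneg_left hsq (by positivity)
      _ = M/c1 * (Real.exp (-(π/2)*L^2) * (2*L)) := by ring
      _ ≤ (1/2) * 1 := by
          apply mul_le_mul hMc2 hexp (by positivity) (by norm_num)
      _ = 1/2 := by norm_num
  calc (∫⁻ x in Set.Ici T, ENNReal.ofReal (u x ^ p x))
        + ∫⁻ x in (Set.Ici T)ᶜ, ENNReal.ofReal (u x ^ p x)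
      ≤ ENNReal.ofReal (1/2) + ENNReal.ofReal (1/2) := add_le_add hA hB
    _ = 1 := by rw [← ENNReal.ofReal_add (by norm_num) (by norm_num)]; norm_num

lemma lhs_bound (q : ℝ → ℝ≥0∞) (G : ℝ → ℂ) (Mf L a B lr : ℝ)
    (hL : 1 ≤ L) (hMf : 0 < Mf) (hB : 1 ≤ B)
    (hqB : ∀ ξ ∈ Set.Icc a (a + 1/L), q ξ ≠ ∞ → B ≤ (q ξ).toReal)
    (hG : ∀ t, ‖G t‖ = Mf * Real.exp (-(π*L^2) * (t-a)^2))
    (hlr : 0 < lr) (hmod : modularE q (fun t => G t / (lr:ℂ)) ≤ 1) :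
    Real.exp (-π) * Mf * L^(-(B⁻¹)) / 2 ≤ lr := by
  by_contra hcon
  push_neg at hcon
  have hL0 : (0:ℝ) < L := lt_of_lt_of_le one_pos hL
  have hB0 : (0:ℝ) < B := lt_of_lt_of_le one_pos hB
  have hLB1 : 1 ≤ L^(B⁻¹) := by
    have := Real.rpow_le_rpow_of_exponent_le hL (show (0:ℝ) ≤ B⁻¹ by positivity)
    rwa [Real.rpow_zero] at this
  set τ : ℝ := 2 * L^(B⁻¹) with hτdef
  have hτ2 : 2 ≤ τ := by nlinarith
  have key : ∀ t ∈ Set.Icc a (a + 1/L), τ ≤ ‖G t / (lr:ℂ)‖ := by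
    intro t ht
    obtain ⟨ht1, ht2⟩ := ht
    have hexp : Real.exp (-π) ≤ Real.exp (-(π*L^2) * (t-a)^2) := by
      apply Real.exp_le_exp.mpr
      have h1 : 0 ≤ t - a := by linarith
      have h3 : (t-a)^2 ≤ (1/L)^2 := by nlinarith
      have h4 : (π*L^2) * (t-a)^2 ≤ (π*L^2) * (1/L)^2 :=
        mul_le_mul_of_nonneg_left h3 (by positivity)
      have h5 : (π*L^2) * (1/L)^2 = π := by field_simp
      linarith
    have hnorm : ‖G t / (lr:ℂ)‖ = ‖G t‖ / lr := by
      rw [norm_div, Complex.norm_real, Real.norm_eq_abs, abs_of_pos hlr]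
    rw [hnorm, hG, le_div_iff₀ hlr]
    refine le_of_lt ?_
    have hLL : L^(B⁻¹) * L^(-(B⁻¹)) = 1 := by
      rw [← Real.rpow_add hL0]; simp
    calc τ * lr < τ * (Real.exp (-π) * Mf * L^(-(B⁻¹)) / 2) :=
          mul_lt_mul_of_pos_left hcon (by positivity)
      _ = (Real.exp (-π) * Mf) * (L^(B⁻¹) * L^(-(B⁻¹))) := by rw [hτdef]; ring
      _ = Real.exp (-π) * Mf := by rw [hLL, mul_one]
      _ ≤ Mf * Real.exp (-(π*L^2) * (t-a)^2) := by
          rw [mul_comm]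
          exact mul_le_mul_of_nonneg_left hexp hMf.le
  have hptwise : ∀ t : ℝ, (Set.Icc a (a + 1/L)).indicator (fun _ => ENNReal.ofReal (τ^B)) t
      ≤ (if q t = ∞ then (if ‖G t / (lr:ℂ)‖ ≤ 1 then 0 else ∞)
         else ENNReal.ofReal (‖G t / (lr:ℂ)‖ ^ (q t).toReal)) := by
    intro t
    by_cases ht : t ∈ Set.Icc a (a + 1/L)
    · rw [Set.indicator_of_mem ht]
      have hτt := key t ht
      by_cases hq : q t = ∞
      · rw [if_pos hq, if_neg (by push_neg; linarith : ¬ ‖G t / (lr:ℂ)‖ ≤ 1)]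
        exact le_top
      · rw [if_neg hq]
        apply ENNReal.ofReal_le_ofReal
        calc τ^B ≤ τ^((q t).toReal) :=
              Real.rpow_le_rpow_of_exponent_le (by linarith) (hqB t ht hq)
          _ ≤ ‖G t / (lr:ℂ)‖^((q t).toReal) :=
              Real.rpow_le_rpow (by linarith) hτt (ENNReal.toReal_nonneg)
    · rw [Set.indicator_of_notMem ht]; exact zero_le
  have hlow : ENNReal.ofReal (τ^B) * volume (Set.Icc a (a + 1/L))
      ≤ modularE q (fun t => G t / (lr:ℂ)) := by
    rw [modularE]
    calc ENNReal.ofReal (τ^B) * volume (Set.Icc a (a + 1/L))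
        = ∫⁻ t, (Set.Icc a (a + 1/L)).indicator (fun _ => ENNReal.ofReal (τ^B)) t := by
          rw [lintegral_indicator measurableSet_Icc, setLIntegral_const]
      _ ≤ _ := lintegral_mono hptwise
  have hτB : τ^B = 2^B * L := by
    rw [hτdef, Real.mul_rpow (by norm_num) (by positivity), ← Real.rpow_mul hL0.le,
      inv_mul_cancel₀ (ne_of_gt hB0), Real.rpow_one]
  have h2B : (2:ℝ) ≤ 2^B := by
    have := Real.rpow_le_rpow_of_exponent_le (x := 2) (by norm_num) hB
    rwa [Real.rpow_one] at this
  have hvol : volume (Set.Icc a (a + 1/L)) = ENNReal.ofReal (1/L) := by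
    rw [Real.volume_Icc]; congr 1; ring
  have hfinal : (2:ℝ≥0∞) ≤ 1 := by
    calc (2:ℝ≥0∞) = ENNReal.ofReal 2 := by norm_num
      _ ≤ ENNReal.ofReal (τ^B * (1/L)) := by
          apply ENNReal.ofReal_le_ofReal
          rw [hτB]
          rw [mul_assoc, mul_one_div]
          calc (2:ℝ) = 2 * 1 := by ring
            _ ≤ 2^B * (L/L) := by
                rw [div_self (ne_of_gt hL0)]
                exact mul_le_mul_of_nonneg_right h2B (by norm_num)
      _ = ENNReal.ofReal (τ^B) * ENNReal.ofReal (1/L) := by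
          rw [ENNReal.ofReal_mul (by positivity)]
      _ = ENNReal.ofReal (τ^B) * volume (Set.Icc a (a + 1/L)) := by rw [hvol]
      _ ≤ modularE q (fun t => G t / (lr:ℂ)) := hlow
      _ ≤ 1 := hmod
  norm_num at hfinal

end AuxGauss

open scoped Real in
theorem stmt1 (p : ℝ → ℝ) (hpc : Continuous p) (hpeven : ∀ x, p (-x) = p x)
    (hpmono : MonotoneOn p (Set.Ici (0 : ℝ)))
    (hp1 : ∀ x, 1 ≤ p x) (hp2 : ∀ x, p x ≤ 2)
    (pd : ℝ) (hpd : Tendsto p atTop (nhds pd)) (hpd2 : pd ≤ 2)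
    (q : ℝ → ℝ≥0∞)
    (hq : ∀ x : ℝ, x ≠ 0 → q x = conjExp (ENNReal.ofReal (p (1 / x))))
    (hqLH : LogHolder q)
    (C : ℝ) (hC : 0 < C)
    (hHY : ∀ f : SchwartzMap ℝ ℂ,
      varNormE q (𝓕 ⇑f) ≤
        ENNReal.ofReal C * varNormE (fun x => ENNReal.ofReal (p x)) ⇑f) :
    ∀ x : ℝ, p x = pd := by
  have habs : ∀ x : ℝ, p |x| = p x := by
    intro x
    rcases le_or_gt 0 x with h | h
    · rw [abs_of_nonneg h]
    · rw [abs_of_neg h, hpeven]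
  have hple : ∀ x, p x ≤ pd := by
    intro x
    rw [← habs x]
    refine ge_of_tendsto hpd ?_
    filter_upwards [eventually_ge_atTop |x|] with y hy
    exact hpmono (abs_nonneg x) (le_trans (abs_nonneg x) hy) hy
  intro x0
  by_contra hne
  have hlt : p x0 < pd := lt_of_le_of_ne (hple x0) hne
  have hpd1 : 1 < pd := lt_of_le_of_lt (hp1 x0) hlt
  set α : ℝ := (p x0 + pd)/2 with hαdef
  have hα1 : 1 < α := by have := hp1 x0; simp only [hαdef]; linarith
  have hαpd : α < pd := by simp only [hαdef]; linarith
  have hxα : p x0 < α := by simp only [hαdef]; linarith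
  have hα2 : α ≤ 2 := by have := hp2 x0; simp only [hαdef]; linarith
  -- find x₁ > 0 with p x₁ = α
  obtain ⟨Y, hY1, hY2⟩ : ∃ Y, |x0| ≤ Y ∧ α < p Y := by
    have h1 : ∀ᶠ y in atTop, α < p y := hpd.eventually (eventually_gt_nhds hαpd)
    exact ((eventually_ge_atTop |x0|).and h1).exists
  obtain ⟨x₁, hx₁mem, hx₁⟩ : ∃ x₁ ∈ Set.Icc |x0| Y, p x₁ = α := by
    have h2 := intermediate_value_Icc hY1 hpc.continuousOn
    have hmem : α ∈ Set.Icc (p |x0|) (p Y) := by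
      constructor
      · rw [habs]; linarith
      · linarith
    exact h2 hmem
  have hx₁0 : 0 < x₁ := by
    rcases lt_or_eq_of_le (le_trans (abs_nonneg x0) hx₁mem.1) with h | h
    · exact h
    · exfalso
      have h0 : |x0| = 0 := le_antisymm (h ▸ hx₁mem.1) (abs_nonneg x0)
      rw [← h] at hx₁
      rw [← h0, habs] at hx₁
      linarith
  set a : ℝ := 1/x₁ with hadef
  have ha0 : 0 < a := by positivity
  set r : ℝ := (α + pd)/2 with hrdef
  have hr1 : 1 < r := by simp only [hrdef]; linarith
  have hrα : α < r := by simp only [hrdef]; linarith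
  have hrpd : r < pd := by simp only [hrdef]; linarith
  have hr2 : r ≤ 2 := by simp only [hrdef]; linarith
  obtain ⟨T, hT⟩ : ∃ T : ℝ, ∀ y, T ≤ y → r ≤ p y := by
    have h1 : ∀ᶠ y in atTop, r < p y := hpd.eventually (eventually_gt_nhds hrpd)
    rw [eventually_atTop] at h1
    obtain ⟨T, hT⟩ := h1
    exact ⟨T, fun y hy => (hT y hy).le⟩
  set B : ℝ := (1 - α⁻¹)⁻¹ with hBdef
  have hα0 : (0:ℝ) < α := by linarith
  have hαinv1 : α⁻¹ < 1 := inv_lt_one_of_one_lt₀ hα1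
  have h1α : (0:ℝ) < 1 - α⁻¹ := by linarith
  have hB1 : 1 ≤ B := by
    have h := inv_anti₀ h1α (show 1-α⁻¹ ≤ 1 by
      have : (0:ℝ) ≤ α⁻¹ := by positivity
      linarith)
    simpa using h
  have hBinv : B⁻¹ = 1 - α⁻¹ := by rw [hBdef, inv_inv]
  set δ : ℝ := α⁻¹ - r⁻¹ with hδdef
  have hδ : 0 < δ := by
    rw [hδdef, sub_pos]
    exact inv_strictAnti₀ hα0 hrα
  obtain ⟨L, hL4C, hL1⟩ : ∃ L : ℝ, 4*C*Real.exp π < L^δ ∧ 1 ≤ L := by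
    have h1 := (tendsto_rpow_atTop hδ).eventually_gt_atTop (4*C*Real.exp π)
    exact (h1.and (eventually_ge_atTop 1)).exists
  have hL0 : (0:ℝ) < L := lt_of_lt_of_le one_pos hL1
  set X : ℝ := T + L^2 with hXdef
  set β : ℝ := (L⁻¹)^2 with hβdef
  set γ : ℝ := X*β with hγdef
  set M : ℝ := Real.exp (π*β*X^2) with hMdef
  have hM0 : 0 < M := Real.exp_pos _
  have hβ0 : (0:ℝ) < β := by rw [hβdef]; positivity
  have hβre : (0:ℝ) < (((β:ℝ):ℂ)).re := by simpa using hβ0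
  set F : SchwartzMap ℝ ℂ :=
    gaussSchwartz ((β:ℝ):ℂ) (((γ:ℝ):ℂ) + ((a:ℝ):ℂ)*Complex.I) hβre with hFdef
  have hFcoe : ⇑F = gaussFun ((β:ℝ):ℂ) (((γ:ℝ):ℂ) + ((a:ℝ):ℂ)*Complex.I) := rfl
  -- spatial norm
  have hFnorm : ∀ x : ℝ, ‖F x‖ = M * Real.exp (-(π*(L⁻¹)^2) * (x-X)^2) := by
    intro x
    have h1 : ‖F x‖ = Real.exp (-(π*β)*x^2 + (2*π*γ)*x) := by
      rw [show F x = gaussFun ((β:ℝ):ℂ) (((γ:ℝ):ℂ) + ((a:ℝ):ℂ)*Complex.I) x from rfl,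
        norm_gaussFun]
      norm_num [Complex.add_re, Complex.mul_re, Complex.ofReal_re, Complex.ofReal_im,
        Complex.I_re, Complex.I_im]
    rw [h1, hMdef, ← Real.exp_add]
    congr 1
    rw [hγdef, hβdef]
    ring
  -- Fourier norm
  have hFfour : ∀ t : ℝ, ‖𝓕 ⇑F t‖ = (L*M) * Real.exp (-(π*L^2) * (t-a)^2) := by
    intro t
    rw [hFcoe, norm_fourier_gauss L a X β γ hL0 hβdef hγdef t]
  -- RHS estimate
  have hmodp := rhs_bound p hp1 (⇑F) M L T r X hM0 hL1 hr1 hr2 hXdef hT hFnorm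
  have hvarp : varNormE (fun x => ENNReal.ofReal (p x)) ⇑F ≤ ENNReal.ofReal (2*M*L^(r⁻¹)) := by
    apply sInf_le
    have hLr0 : (0:ℝ) < L^(r⁻¹) := Real.rpow_pos_of_pos hL0 _
    exact ⟨2*M*L^(r⁻¹), by positivity, rfl, hmodp⟩
  -- q bound on the frequency interval
  have hqB : ∀ ξ ∈ Set.Icc a (a + 1/L), q ξ ≠ ∞ → B ≤ (q ξ).toReal := by
    intro ξ hξ hqne
    have hξa : a ≤ ξ := hξ.1
    have hξ0 : 0 < ξ := lt_of_lt_of_le ha0 hξa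
    have hinv : 1/ξ ≤ x₁ := by
      have h1 : 1/ξ ≤ 1/a := one_div_le_one_div_of_le ha0 hξa
      rwa [hadef, one_div_one_div] at h1
    have hs1 : 1 ≤ p (1/ξ) := hp1 _
    have hsα : p (1/ξ) ≤ α := by
      rw [← hx₁]
      exact hpmono (Set.mem_Ici.mpr (by positivity)) (Set.mem_Ici.mpr hx₁0.le) hinv
    have hqξ : q ξ = conjExp (ENNReal.ofReal (p (1/ξ))) := hq ξ (ne_of_gt hξ0)
    rw [hqξ] at hqne ⊢
    rw [hBdef]
    exact conjExp_toReal_ge (p (1/ξ)) α hs1 hsα hα1 hqne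
  -- LHS estimate
  have hvarq : ENNReal.ofReal (Real.exp (-π) * (L*M) * L^(-(B⁻¹)) / 2)
      ≤ varNormE q (𝓕 ⇑F) := by
    apply le_sInf
    rintro l ⟨lr, hlr0, rfl, hmodq⟩
    exact ENNReal.ofReal_le_ofReal
      (lhs_bound q (𝓕 ⇑F) (L*M) L a B lr hL1 (by positivity) hB1 hqB hFfour hlr0 hmodq)
  -- chain
  have hchain : ENNReal.ofReal (Real.exp (-π) * (L*M) * L^(-(B⁻¹)) / 2)
      ≤ ENNReal.ofReal (C * (2*M*L^(r⁻¹))) := by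
    calc ENNReal.ofReal (Real.exp (-π) * (L*M) * L^(-(B⁻¹)) / 2)
        ≤ varNormE q (𝓕 ⇑F) := hvarq
      _ ≤ ENNReal.ofReal C * varNormE (fun x => ENNReal.ofReal (p x)) ⇑F := hHY F
      _ ≤ ENNReal.ofReal C * ENNReal.ofReal (2*M*L^(r⁻¹)) := mul_le_mul_right hvarp _
      _ = ENNReal.ofReal (C * (2*M*L^(r⁻¹))) := (ENNReal.ofReal_mul hC.le).symm
  have hLr0 : (0:ℝ) < L^(r⁻¹) := Real.rpow_pos_of_pos hL0 _
  rw [ENNReal.ofReal_le_ofReal_iff (by positivity)] at hchain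
  -- final arithmetic
  have hLL' : L * L^(-(B⁻¹)) = L^(α⁻¹) := by
    nth_rewrite 1 [← Real.rpow_one L]
    rw [← Real.rpow_add hL0, hBinv]
    congr 1
    ring
  have hsplit : L^(α⁻¹) = L^δ * L^(r⁻¹) := by
    rw [← Real.rpow_add hL0, hδdef]
    congr 1
    ring
  have hiden : Real.exp (-π) * (L*M) * L^(-(B⁻¹)) / 2
      = Real.exp (-π) * M * (L^δ * L^(r⁻¹)) / 2 := by
    rw [← hsplit, ← hLL']
    ring
  rw [hiden, Real.exp_neg] at hchain
  have hEpos := Real.exp_pos π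
  have h2 := mul_le_mul_of_nonneg_left hchain hEpos.le
  have h3 : Real.exp π * ((Real.exp π)⁻¹ * M * (L^δ * L^(r⁻¹)) / 2)
      = M * (L^δ * L^(r⁻¹)) / 2 := by
    field_simp
  rw [h3] at h2
  have h4 : M * (L^δ * L^(r⁻¹))/2 = (L^δ) * (M*L^(r⁻¹)/2) := by ring
  have h5 : Real.exp π * (C * (2*M*L^(r⁻¹))) = (4*C*Real.exp π) * (M*L^(r⁻¹)/2) := by ring
  rw [h4, h5] at h2
  have h6 : L^δ ≤ 4*C*Real.exp π := le_of_mul_le_mul_right h2 (by positivity)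
  linarith
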